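/- arXiv:math/0101037 — 4 statements merged into one kernel-verified Lean document; each statement's English description precedes it below -/
import Mathlib

section
/- (Minimal Reduction Theorem) Let $L : \mathbb{R}^n \to \mathbb{R}^n$ be linear and $N \subseteq \mathbb{R}^n$ a subspace such that there is no nonzero subspace $G \subseteq N$ with $L(G) \subseteq G$. Define $N_1 = N$, $N_{i+1} = N \cap L(N_i)$. Then for every $i$ with $1 \leq i \leq \dim N + 1$, $\dim N_i \leq \dim N - i + 1$. -/
/-- Minimal Reduction Theorem: `dim N_i ≤ dim N - i + 1`, stated as
`finrank (N_i) + i ≤ finrank N + 1` to avoid truncated subtraction. -/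
theorem stmt_2 {n : ℕ} (L : (Fin n → ℝ) →ₗ[ℝ] (Fin n → ℝ))
    (N : Submodule ℝ (Fin n → ℝ))
    (hinv : ∀ G : Submodule ℝ (Fin n → ℝ), G ≤ N → G.map L ≤ G → G = ⊥)
    (Ns : ℕ → Submodule ℝ (Fin n → ℝ))
    (h1 : Ns 1 = N)
    (hrec : ∀ i ≥ 1, Ns (i + 1) = N ⊓ (Ns i).map L) :
    ∀ i, 1 ≤ i → i ≤ Module.finrank ℝ N + 1 →
      Module.finrank ℝ (Ns i) + i ≤ Module.finrank ℝ N + 1 := by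
  have hle : ∀ i, 1 ≤ i → Ns (i + 1) ≤ Ns i := by
    intro i hi
    induction i with
    | zero => omega
    | succ k ih =>
      match k, ih with
      | 0, _ =>
        rw [hrec 1 le_rfl, h1]
        exact inf_le_left
      | m + 1, ih =>
        show Ns (m + 2 + 1) ≤ Ns (m + 1 + 1)
        rw [hrec (m + 1) (by omega), hrec (m + 2) (by omega)]
        exact inf_le_inf_left _ (Submodule.map_mono
          (show Ns (m + 2) ≤ Ns (m + 1) from ih (by omega)))
  intro i
  induction i with
  | zero => omega
  | succ k ih =>
    intro _ hk2
    rcases Nat.eq_zero_or_pos k with hk0 | hk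
    · subst hk0; rw [h1]
    have hkle := ih hk (by omega)
    by_cases hlt : Module.finrank ℝ (Ns (k + 1)) < Module.finrank ℝ (Ns k)
    · omega
    · have hmono : Module.finrank ℝ (Ns (k + 1)) ≤ Module.finrank ℝ (Ns k) :=
        Submodule.finrank_mono (hle k hk)
      have heq : Ns (k + 1) = Ns k :=
        Submodule.eq_of_le_of_finrank_le (hle k hk) (by omega)
      have hG : Ns k = N ⊓ (Ns k).map L := by
        conv_lhs => rw [← heq, hrec k hk]
      have hsub : Ns k ≤ (Ns k).map L := le_trans hG.le inf_le_right
      have hmap : (Ns k).map L = Ns k :=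
        (Submodule.eq_of_le_of_finrank_le hsub (Submodule.finrank_map_le L _)).symm
      have hbot := hinv _ (le_trans hG.le inf_le_left) hmap.le
      rw [heq, hbot, finrank_bot]
      omega
end

section
/- Let $L : \mathbb{R}^n \to \mathbb{R}^n$ be linear, $N$ a subspace with no nonzero $L$-invariant subspace contained in $N$, and define $N_1 = N$, $N_{i+1} = N \cap L(N_i)$. Then $N_{\dim N + 1} = \{0\}$. -/
theorem stmt_3 {n : ℕ} (L : (Fin n → ℝ) →ₗ[ℝ] (Fin n → ℝ))
    (N : Submodule ℝ (Fin n → ℝ))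
    (hinv : ∀ G : Submodule ℝ (Fin n → ℝ), G ≤ N → G.map L ≤ G → G = ⊥)
    (Ns : ℕ → Submodule ℝ (Fin n → ℝ))
    (h1 : Ns 1 = N)
    (hrec : ∀ i ≥ 1, Ns (i + 1) = N ⊓ (Ns i).map L) :
    Ns (Module.finrank ℝ N + 1) = ⊥ := by
  -- monotonicity
  have hle : ∀ i ≥ 1, Ns (i + 1) ≤ Ns i := by
    intro i hi
    induction i with
    | zero => omega
    | succ j ih =>
      rcases Nat.eq_or_lt_of_le hi with h | h
      · obtain rfl : j = 0 := by omega
        rw [hrec 1 le_rfl, h1]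
        exact inf_le_left
      · have hj : j ≥ 1 := by omega
        have h2 := inf_le_inf (le_refl N) (Submodule.map_mono (f := L) (ih hj))
        rw [← hrec j hj] at h2
        rw [hrec (j + 1) (by omega)]
        exact h2
  have hsubN : ∀ i ≥ 1, Ns i ≤ N := by
    intro i hi
    rcases Nat.eq_or_lt_of_le hi with h | h
    · rw [← h, h1]
    · obtain ⟨j, rfl⟩ : ∃ j, i = j + 1 := ⟨i - 1, by omega⟩
      rw [hrec j (by omega)]; exact inf_le_left
  -- fixed point implies bottom
  have hfix : ∀ i ≥ 1, Ns i ≤ Ns (i + 1) → Ns i = ⊥ := by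
    intro i hi hle'
    have h2 : Ns i ≤ (Ns i).map L := by
      have := hle'.trans (le_of_eq (hrec i hi))
      exact this.trans inf_le_right
    have h3 : (Ns i).map L = Ns i :=
      (Submodule.eq_of_le_of_finrank_le h2 (Submodule.finrank_map_le L (Ns i))).symm
    exact hinv (Ns i) (hsubN i hi) (le_of_eq h3)
  -- main induction
  have key : ∀ j, Ns (j + 1) = ⊥ ∨
      Module.finrank ℝ (Ns (j + 1)) + j ≤ Module.finrank ℝ N := by
    intro j
    induction j with
    | zero => right; rw [h1]; omega
    | succ j ih =>
      rcases ih with hb | hr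
      · left
        rw [hrec (j + 1) (by omega), hb, Submodule.map_bot, inf_bot_eq]
      · by_cases heq : Ns (j + 1) ≤ Ns (j + 2)
        · left
          have := hfix (j + 1) (by omega) heq
          rw [hrec (j + 1) (by omega), this, Submodule.map_bot, inf_bot_eq]
        · right
          have hlt : Ns (j + 1 + 1) < Ns (j + 1) :=
            lt_of_le_of_ne (hle (j + 1) (by omega)) (fun h => heq (le_of_eq h.symm))
          have := Submodule.finrank_lt_finrank_of_lt hlt
          omega
  rcases key (Module.finrank ℝ N) with hb | hr
  · exact hb
  · have h0 : Module.finrank ℝ (Ns (Module.finrank ℝ N + 1)) = 0 := by omega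
    exact Submodule.finrank_eq_zero.mp h0
end

section
/- Let $K, M$ be subspaces of $\mathbb{R}^n$, let $P_{K^\perp}$ and $P_M$ denote the orthogonal projections onto $K^\perp$ and $M$, and let $L : \mathbb{R}^n \to \mathbb{R}^n$ be an invertible linear map. Then $K$ and $L(M)$ intersect transversely (i.e., $\dim(K \cap L(M)) = \max(\dim K + \dim M - n, 0)$) if and only if $\operatorname{rank}(P_{K^\perp} \circ L \circ P_M) = \min(\dim K^\perp, \dim M)$. -/
theorem stmt_13 {n : ℕ} (K M : Submodule ℝ (EuclideanSpace ℝ (Fin n)))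
    (L : EuclideanSpace ℝ (Fin n) →ₗ[ℝ] EuclideanSpace ℝ (Fin n))
    (hL : Function.Bijective L) :
    Module.finrank ℝ (K ⊓ M.map L : Submodule ℝ (EuclideanSpace ℝ (Fin n))) =
        Module.finrank ℝ K + Module.finrank ℝ M - n ↔
      Module.finrank ℝ
          (LinearMap.range
            ((Kᗮ.subtype ∘ₗ (Submodule.orthogonalProjectionOnto Kᗮ).toLinearMap) ∘ₗ L ∘ₗ
              (M.subtype ∘ₗ (Submodule.orthogonalProjectionOnto M).toLinearMap))) =
        min (Module.finrank ℝ Kᗮ) (Module.finrank ℝ M) := by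
  set Pk : EuclideanSpace ℝ (Fin n) →ₗ[ℝ] EuclideanSpace ℝ (Fin n) :=
    Kᗮ.subtype ∘ₗ (Submodule.orthogonalProjectionOnto Kᗮ).toLinearMap with hPkdef
  set Pm : EuclideanSpace ℝ (Fin n) →ₗ[ℝ] EuclideanSpace ℝ (Fin n) :=
    M.subtype ∘ₗ (Submodule.orthogonalProjectionOnto M).toLinearMap with hPmdef
  set W : Submodule ℝ (EuclideanSpace ℝ (Fin n)) := M.map L with hW
  -- range of Pm is M
  have hrangePm : LinearMap.range Pm = M := by
    apply le_antisymm
    · rw [hPmdef, LinearMap.range_comp]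
      exact (Submodule.map_subtype_le _ _)
    · intro x hx
      exact ⟨x, by simp [hPmdef, Submodule.coe_orthogonalProjectionOnto_apply, Submodule.starProjection_eq_self_iff.2 hx]⟩
  -- kernel of Pk is K
  have hkerPk : LinearMap.ker Pk = K := by
    rw [hPkdef, LinearMap.ker_comp, Submodule.ker_subtype, Submodule.comap_bot]
    rw [show LinearMap.ker (Submodule.orthogonalProjectionOnto Kᗮ).toLinearMap
        = (Submodule.orthogonalProjectionOnto Kᗮ).ker from rfl,
      Submodule.ker_orthogonalProjectionOnto, Submodule.orthogonal_orthogonal]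
  -- range of the big composite equals W.map Pk
  have hrange : LinearMap.range (Pk ∘ₗ L ∘ₗ Pm) = W.map Pk := by
    rw [LinearMap.range_comp, LinearMap.range_comp, hrangePm]
  -- restrict Pk to W
  have hrn := LinearMap.finrank_range_add_finrank_ker (Pk ∘ₗ W.subtype)
  have hker : LinearMap.ker (Pk ∘ₗ W.subtype) = (K ⊓ W).comap W.subtype := by
    rw [LinearMap.ker_comp, hkerPk]
    ext x
    simp [Submodule.mem_comap]
  have hkerdim : Module.finrank ℝ (LinearMap.ker (Pk ∘ₗ W.subtype))
      = Module.finrank ℝ (K ⊓ W : Submodule ℝ (EuclideanSpace ℝ (Fin n))) := by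
    rw [hker]
    rw [← Submodule.finrank_map_subtype_eq W ((K ⊓ W).comap W.subtype),
      Submodule.map_comap_subtype]
    rw [inf_eq_right.2 (inf_le_right : K ⊓ W ≤ W)]
  have hrangedim : Module.finrank ℝ (LinearMap.range (Pk ∘ₗ W.subtype))
      = Module.finrank ℝ (W.map Pk) := by
    rw [LinearMap.range_comp, Submodule.range_subtype]
  -- finrank W = finrank M
  have hWM : Module.finrank ℝ W = Module.finrank ℝ M := by
    rw [hW, ← (LinearEquiv.ofBijective L hL).finrank_map_eq M]
    rfl
  -- finrank W within Pk's range bound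
  have hle1 : Module.finrank ℝ (W.map Pk) ≤ Module.finrank ℝ Kᗮ := by
    have : W.map Pk ≤ Kᗮ := by
      rintro _ ⟨x, -, rfl⟩
      exact (Submodule.orthogonalProjectionOnto Kᗮ x).2
    exact Submodule.finrank_mono this
  have hKn : Module.finrank ℝ K + Module.finrank ℝ Kᗮ = n := by
    rw [Submodule.finrank_add_finrank_orthogonal]
    simp [finrank_euclideanSpace]
  have hMn : Module.finrank ℝ M ≤ n := by
    simpa [finrank_euclideanSpace] using M.finrank_le
  rw [hkerdim, hrangedim, hWM] at hrn
  have hgoal : Module.finrank ℝ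
      (LinearMap.range (Pk ∘ₗ L ∘ₗ Pm)) = Module.finrank ℝ (W.map Pk) := by
    rw [hrange]
  omega
end

section
/- Let $V \subseteq \mathbb{R}^n$ be a fixed $k$-dimensional subspace with $k \geq 1$, and fix $T \geq 1$. The set of $n \times n$ matrices $L$ such that $\dim(V + L(V) + \cdots + L^{j-1}(V)) = \min(jk, n)$ for all $1 \leq j \leq T$ is open and dense (indeed of full Lebesgue measure) in $\mathbb{R}^{n^2}$. -/
open MeasureTheory

section Aux

open MvPolynomial Matrix Module Submodule



private lemma cont_cons {d : ℕ} :
    Continuous fun z : (Fin d → ℝ) × ℝ => (Fin.cons z.2 z.1 : Fin (d + 1) → ℝ) := by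
  apply continuous_pi
  intro i
  refine Fin.cases ?_ ?_ i
  · simpa using continuous_snd
  · intro j; simp only [Fin.cons_succ]; exact (continuous_apply j).comp continuous_fst

private lemma aux_fin_null : ∀ (d : ℕ) (p : MvPolynomial (Fin d) ℝ), p ≠ 0 →
    volume {x : Fin d → ℝ | MvPolynomial.eval x p = 0} = 0 := by
  intro d
  induction d with
  | zero =>
    intro p hp
    obtain ⟨c, rfl⟩ := MvPolynomial.C_surjective (Fin 0) p
    have hc : c ≠ 0 := fun h => hp (by rw [h, map_zero])
    convert measure_empty
    · ext x; simp [hc]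
    · infer_instance
  | succ d ih =>
    intro p hp
    set q : Polynomial (MvPolynomial (Fin d) ℝ) := MvPolynomial.finSuccEquiv ℝ d p with hqdef
    have hq0 : q ≠ 0 := by
      intro h
      apply hp
      exact (MvPolynomial.finSuccEquiv ℝ d).injective (by rw [map_zero]; exact hqdef ▸ h)
    have hlead : q.leadingCoeff ≠ 0 := Polynomial.leadingCoeff_ne_zero.mpr hq0
    have hZ : volume {y : Fin d → ℝ | MvPolynomial.eval y q.leadingCoeff = 0} = 0 :=
      ih q.leadingCoeff hlead
    set F : (Fin d → ℝ) × ℝ → ℝ :=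
      fun z => Polynomial.eval z.2 (q.map (MvPolynomial.eval z.1)) with hFdef
    have hFkey : ∀ z : (Fin d → ℝ) × ℝ, F z = MvPolynomial.eval (Fin.cons z.2 z.1) p := by
      intro z
      rw [MvPolynomial.eval_eq_eval_mv_eval' z.1 z.2 p]
    have hFc : Continuous F := by
      have : F = fun z : (Fin d → ℝ) × ℝ => MvPolynomial.eval (Fin.cons z.2 z.1) p := by
        funext z; exact hFkey z
      rw [this]
      exact (MvPolynomial.continuous_eval (p := p)).comp cont_cons
    have hT'm : MeasurableSet {z : (Fin d → ℝ) × ℝ | F z = 0} :=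
      hFc.measurable (measurableSet_singleton 0)
    have hT' : ((volume : Measure (Fin d → ℝ)).prod (volume : Measure ℝ))
        {z : (Fin d → ℝ) × ℝ | F z = 0} = 0 := by
      rw [Measure.measure_prod_null hT'm]
      filter_upwards [measure_eq_zero_iff_ae_notMem.mp hZ] with y hy
      have hr : q.map (MvPolynomial.eval y) ≠ 0 := by
        intro h
        apply hy
        have h2 := congrArg (fun r => Polynomial.coeff r q.natDegree) h
        simpa [Polynomial.coeff_map, Polynomial.coeff_natDegree] using h2
      have hset : Prod.mk y ⁻¹' {z : (Fin d → ℝ) × ℝ | F z = 0}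
          = {t : ℝ | (q.map (MvPolynomial.eval y)).IsRoot t} := rfl
      show volume (Prod.mk y ⁻¹' {z : (Fin d → ℝ) × ℝ | F z = 0}) = 0
      rw [hset]
      exact (Polynomial.finite_setOf_isRoot hr).measure_zero _
    -- transfer to Fin (d+1) → ℝ
    have hmp := volume_preserving_piFinSuccAbove (fun _ : Fin (d + 1) => ℝ) 0
    set e := MeasurableEquiv.piFinSuccAbove (fun _ : Fin (d + 1) => ℝ) 0 with hedef
    have hS : {x : Fin (d + 1) → ℝ | MvPolynomial.eval x p = 0}
        = e ⁻¹' (Prod.swap ⁻¹' {z : (Fin d → ℝ) × ℝ | F z = 0}) := by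
      ext x
      simp only [Set.mem_preimage, Set.mem_setOf_eq]
      rw [hFkey]
      have hex : (Fin.cons (Prod.swap (e x)).2 (Prod.swap (e x)).1 : Fin (d+1) → ℝ) = x := by
        have h1 : (e x).1 = x 0 := rfl
        have h2 : (e x).2 = fun j => x j.succ := by
          funext j; show x ((0 : Fin (d+1)).succAbove j) = x j.succ
          rw [Fin.succAbove_zero]
        show (Fin.cons (e x).1 (e x).2 : Fin (d+1) → ℝ) = x
        rw [h1, h2]
        exact Fin.cons_self_tail x
      rw [hex]
    rw [hS]
    have hsm : MeasurableSet (Prod.swap ⁻¹' {z : (Fin d → ℝ) × ℝ | F z = 0}) :=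
      hT'm.preimage measurable_swap
    rw [hmp.measure_preimage hsm.nullMeasurableSet]
    rw [← Measure.map_apply measurable_swap hT'm]
    rw [show (volume : Measure (ℝ × (Fin d → ℝ))) = (volume : Measure ℝ).prod volume from rfl,
      Measure.prod_swap]
    exact hT'




lemma mv_null {ι : Type*} [Fintype ι] (p : MvPolynomial ι ℝ) (hp : p ≠ 0) :
    volume {x : ι → ℝ | MvPolynomial.eval x p = 0} = 0 := by
  classical
  set e := Fintype.equivFin ι with hedef
  have hq : MvPolynomial.rename e p ≠ 0 := by
    intro h
    exact hp (MvPolynomial.rename_injective e e.injective (by rw [h, map_zero]))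
  set E := MeasurableEquiv.piCongrLeft (fun _ : Fin (Fintype.card ι) => ℝ) e with hEdef
  have hmp : MeasurePreserving E volume volume :=
    volume_measurePreserving_piCongrLeft (fun _ => ℝ) e
  have hset : {x : ι → ℝ | MvPolynomial.eval x p = 0}
      = E ⁻¹' {y : Fin (Fintype.card ι) → ℝ | MvPolynomial.eval y (MvPolynomial.rename e p) = 0} := by
    ext x
    simp only [Set.mem_preimage, Set.mem_setOf_eq]
    rw [MvPolynomial.eval_rename]
    have : (E x) ∘ e = x := by
      funext i
      show (MeasurableEquiv.piCongrLeft (fun _ => ℝ) e) x (e i) = x i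
      rw [MeasurableEquiv.piCongrLeft]
      show (Equiv.piCongrLeft (fun _ => ℝ) e) x (e i) = x i
      rw [Equiv.piCongrLeft_apply_apply]
    rw [this]
  have hms : MeasurableSet
      {y : Fin (Fintype.card ι) → ℝ | MvPolynomial.eval y (MvPolynomial.rename e p) = 0} :=
    (MvPolynomial.continuous_eval (p := MvPolynomial.rename e p)).measurable
      (measurableSet_singleton 0)
  rw [hset, hmp.measure_preimage hms.nullMeasurableSet]
  exact aux_fin_null _ _ hq

lemma mp_curry (n : ℕ) :
    MeasurePreserving (fun (L : Fin n → Fin n → ℝ) (rc : Fin n × Fin n) => L rc.1 rc.2)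
      volume volume := by
  have hmeas : Measurable (fun (L : Fin n → Fin n → ℝ) (rc : Fin n × Fin n) => L rc.1 rc.2) :=
    measurable_pi_lambda _ fun rc => (measurable_pi_apply rc.2).comp (measurable_pi_apply rc.1)
  refine ⟨hmeas, ?_⟩
  refine (Measure.pi_eq fun s hs => ?_).symm
  rw [Measure.map_apply hmeas (MeasurableSet.univ_pi hs)]
  have hpre : (fun (L : Fin n → Fin n → ℝ) (rc : Fin n × Fin n) => L rc.1 rc.2) ⁻¹'
      (Set.pi Set.univ s)
      = Set.pi Set.univ (fun i : Fin n => Set.pi Set.univ (fun j : Fin n => s (i, j))) := by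
    ext L
    simp only [Set.mem_preimage, Set.mem_pi, Set.mem_univ, true_implies, Prod.forall]
  rw [hpre, volume_pi_pi]
  have : ∀ i : Fin n, volume (Set.pi Set.univ fun j : Fin n => s (i, j))
      = ∏ j : Fin n, volume (s (i, j)) := fun i => volume_pi_pi _
  simp_rw [this]
  exact (Fintype.prod_prod_type (f := fun p : Fin n × Fin n => volume (s p))).symm


lemma det_ne_iff_rank {ι : Type*} [Fintype ι] [DecidableEq ι] (A : Matrix ι ι ℝ) :
    A.det ≠ 0 ↔ A.rank = Fintype.card ι := by
  constructor
  · intro h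
    exact A.rank_of_isUnit ((Matrix.isUnit_iff_isUnit_det A).mpr (isUnit_iff_ne_zero.mpr h))
  · intro h
    have hrange : LinearMap.range A.mulVecLin = ⊤ := by
      apply Submodule.eq_top_of_finrank_eq
      rw [Module.finrank_pi]
      exact h
    have hsurj : Function.Surjective A.mulVec := by
      intro y
      obtain ⟨x, hx⟩ := LinearMap.range_eq_top.mp hrange y
      exact ⟨x, hx⟩
    exact ((Matrix.isUnit_iff_isUnit_det A).mp
      (Matrix.mulVec_surjective_iff_isUnit.mp hsurj)).ne_zero

lemma mulVecLin_pow {n : ℕ} {R : Type*} [CommRing R] (M : Matrix (Fin n) (Fin n) R) (i : ℕ) :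
    (M ^ i).mulVecLin = M.mulVecLin ^ i := by
  induction i with
  | zero => rw [pow_zero, pow_zero, Matrix.mulVecLin_one]; rfl
  | succ t iht =>
    rw [pow_succ, pow_succ, Matrix.mulVecLin_mul, iht]
    rfl

noncomputable def colMat {R : Type*} [CommRing R] (n k j : ℕ) (vv : Fin k → Fin n → R)
    (M : Matrix (Fin n) (Fin n) R) : Matrix (Fin n) (Fin j × Fin k) R :=
  Matrix.of fun r c => ((M ^ (c.1 : ℕ)) *ᵥ (vv c.2)) r

lemma span_colMat (n k j : ℕ) (vv : Fin k → Fin n → ℝ) (M : Matrix (Fin n) (Fin n) ℝ) :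
    Submodule.span ℝ (Set.range (colMat n k j vv M)ᵀ)
      = ⨆ i : Fin j, (Submodule.span ℝ (Set.range vv)).map (M.mulVecLin ^ (i : ℕ)) := by
  have h1 : ∀ i : Fin j, (Submodule.span ℝ (Set.range vv)).map (M.mulVecLin ^ (i : ℕ))
      = Submodule.span ℝ (Set.range fun a : Fin k => (M ^ (i : ℕ)) *ᵥ vv a) := by
    intro i
    rw [Submodule.map_span, ← Set.range_comp]
    have h2 : (⇑(M.mulVecLin ^ (i : ℕ))) ∘ vv = fun a => (M ^ (i : ℕ)) *ᵥ vv a := by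
      funext a
      show (M.mulVecLin ^ (i : ℕ)) (vv a) = _
      rw [← mulVecLin_pow]
      rfl
    rw [h2]
  simp_rw [h1]
  rw [← Submodule.span_iUnion]
  congr 1
  ext x
  simp only [Set.mem_iUnion, Set.mem_range]
  constructor
  · rintro ⟨⟨i, a⟩, rfl⟩
    exact ⟨i, a, rfl⟩
  · rintro ⟨i, a, rfl⟩
    exact ⟨⟨i, a⟩, rfl⟩

noncomputable def pjPoly (n k j : ℕ) (vv : Fin k → Fin n → ℝ) :
    MvPolynomial (Fin n × Fin n) ℝ :=
  let Xm : Matrix (Fin n) (Fin n) (MvPolynomial (Fin n × Fin n) ℝ) :=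
    Matrix.of fun r c => MvPolynomial.X (r, c)
  let A := colMat n k j (fun a s => MvPolynomial.C (vv a s)) Xm
  if j * k ≤ n then (Aᵀ * A).det else (A * Aᵀ).det

lemma eval_colMat (n k j : ℕ) (vv : Fin k → Fin n → ℝ) (L : Fin n → Fin n → ℝ) :
    (colMat n k j (fun a s => MvPolynomial.C (vv a s))
        (Matrix.of fun r c => (MvPolynomial.X (r, c) : MvPolynomial (Fin n × Fin n) ℝ))).map
      (MvPolynomial.eval (fun rc : Fin n × Fin n => L rc.1 rc.2))
      = colMat n k j vv (Matrix.of L) := by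
  classical
  set f : MvPolynomial (Fin n × Fin n) ℝ →+* ℝ :=
    (MvPolynomial.eval (fun rc : Fin n × Fin n => L rc.1 rc.2) : _ →+* ℝ) with hf
  set Xm : Matrix (Fin n) (Fin n) (MvPolynomial (Fin n × Fin n) ℝ) :=
    Matrix.of fun r c => MvPolynomial.X (r, c) with hXm
  have hXmap : Xm.map f = Matrix.of L := by
    ext r c
    simp [hXm, hf, Matrix.map_apply]
  ext r c
  rw [Matrix.map_apply]
  show f ((Xm ^ (c.1 : ℕ) *ᵥ fun s => MvPolynomial.C (vv c.2 s)) r)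
    = (((Matrix.of L) ^ (c.1 : ℕ)) *ᵥ vv c.2) r
  rw [RingHom.map_mulVec]
  congr 1
  · rw [show (Xm ^ (c.1 : ℕ)).map f = (f.mapMatrix (Xm ^ (c.1 : ℕ)) : Matrix _ _ ℝ) from rfl,
      map_pow, RingHom.mapMatrix_apply, hXmap]
  · funext s
    simp [hf]

lemma cond_iff_eval (n k j : ℕ) (vv : Fin k → Fin n → ℝ) (L : Fin n → Fin n → ℝ) :
    Module.finrank ℝ
        (⨆ i : Fin j, (Submodule.span ℝ (Set.range vv)).map
          ((Matrix.of L).mulVecLin ^ (i : ℕ)) : Submodule ℝ (Fin n → ℝ)) = min (j * k) n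
      ↔ MvPolynomial.eval (fun rc : Fin n × Fin n => L rc.1 rc.2) (pjPoly n k j vv) ≠ 0 := by
  classical
  set A := colMat n k j vv (Matrix.of L) with hA
  have hfr : Module.finrank ℝ
      (⨆ i : Fin j, (Submodule.span ℝ (Set.range vv)).map
        ((Matrix.of L).mulVecLin ^ (i : ℕ)) : Submodule ℝ (Fin n → ℝ)) = A.rank := by
    rw [← span_colMat, Matrix.rank_eq_finrank_span_cols]
    rfl
  set f : MvPolynomial (Fin n × Fin n) ℝ →+* ℝ :=
    (MvPolynomial.eval (fun rc : Fin n × Fin n => L rc.1 rc.2) : _ →+* ℝ) with hf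
  set Ap := colMat n k j (fun a s => MvPolynomial.C (vv a s))
    (Matrix.of fun r c => (MvPolynomial.X (r, c) : MvPolynomial (Fin n × Fin n) ℝ)) with hAp
  have hmap : Ap.map f = A := eval_colMat n k j vv L
  by_cases hjk : j * k ≤ n
  · have heval : f (pjPoly n k j vv) = (Aᵀ * A).det := by
      rw [pjPoly]
      simp only [if_pos hjk]
      rw [RingHom.map_det, RingHom.mapMatrix_apply, Matrix.map_mul, Matrix.transpose_map, hmap]
    rw [show MvPolynomial.eval (fun rc : Fin n × Fin n => L rc.1 rc.2) (pjPoly n k j vv)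
      = f (pjPoly n k j vv) from rfl, heval, hfr]
    rw [det_ne_iff_rank, Matrix.rank_transpose_mul_self]
    rw [min_eq_left hjk]
    have hcard : Fintype.card (Fin j × Fin k) = j * k := by
      rw [Fintype.card_prod, Fintype.card_fin, Fintype.card_fin]
    rw [hcard]
  · have heval : f (pjPoly n k j vv) = (A * Aᵀ).det := by
      rw [pjPoly]
      simp only [if_neg hjk]
      rw [RingHom.map_det, RingHom.mapMatrix_apply, Matrix.map_mul, Matrix.transpose_map, hmap]
    rw [show MvPolynomial.eval (fun rc : Fin n × Fin n => L rc.1 rc.2) (pjPoly n k j vv)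
      = f (pjPoly n k j vv) from rfl, heval, hfr]
    rw [det_ne_iff_rank, Matrix.rank_self_mul_transpose]
    rw [min_eq_right (le_of_not_ge hjk), Fintype.card_fin]




lemma witness (n k : ℕ) (hk : 1 ≤ k) (V : Submodule ℝ (Fin n → ℝ))
    (hV : Module.finrank ℝ V = k) :
    ∃ L : Fin n → Fin n → ℝ, ∀ j : ℕ, 1 ≤ j →
      min (j * k) n ≤ Module.finrank ℝ
        (⨆ i : Fin j, V.map ((Matrix.of L).mulVecLin ^ (i : ℕ)) : Submodule ℝ (Fin n → ℝ)) := by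
  classical
  have hkn : k ≤ n := by
    have h1 := V.finrank_le
    rw [hV, Module.finrank_pi, Fintype.card_fin] at h1
    exact h1
  obtain ⟨W, hW⟩ := Submodule.exists_isCompl V
  have hWfin : Module.finrank ℝ W = n - k := by
    have h1 := Submodule.finrank_add_eq_of_isCompl hW
    rw [hV, Module.finrank_pi, Fintype.card_fin] at h1
    omega
  let bV : Basis (Fin k) ℝ V := Module.finBasisOfFinrankEq ℝ V hV
  let bW : Basis (Fin (n - k)) ℝ W := Module.finBasisOfFinrankEq ℝ W hWfin
  let b0 : Basis (Fin k ⊕ Fin (n - k)) ℝ (Fin n → ℝ) :=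
    (bV.prod bW).map (Submodule.prodEquivOfIsCompl V W hW)
  have hsum : k + (n - k) = n := by omega
  let g : (Fin k ⊕ Fin (n - k)) ≃ Fin n := finSumFinEquiv.trans (finCongr hsum)
  let B : Basis (Fin n) ℝ (Fin n → ℝ) := b0.reindex g
  have hBV : ∀ (a : ℕ) (ha : a < k), B ⟨a, lt_of_lt_of_le ha hkn⟩ = (bV ⟨a, ha⟩ : Fin n → ℝ) := by
    intro a ha
    have hg : g (Sum.inl ⟨a, ha⟩) = ⟨a, lt_of_lt_of_le ha hkn⟩ := by
      apply Fin.ext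
      simp [g]
    rw [← hg, Basis.reindex_apply, Equiv.symm_apply_apply]
    show (Submodule.prodEquivOfIsCompl V W hW) ((bV.prod bW) (Sum.inl ⟨a, ha⟩)) = _
    have h2 : (bV.prod bW) (Sum.inl ⟨a, ha⟩) = (bV ⟨a, ha⟩, (0 : W)) := by
      apply Prod.ext
      · exact Basis.prod_apply_inl_fst _ _ _
      · exact Basis.prod_apply_inl_snd _ _ _
    rw [h2]
    show V.subtype.coprod W.subtype ((bV ⟨a, ha⟩, (0 : W))) = _
    simp
  -- the linear map
  let L0 : (Fin n → ℝ) →ₗ[ℝ] (Fin n → ℝ) :=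
    B.constr ℝ (fun r : Fin n => if h : (r : ℕ) + k < n then B ⟨(r : ℕ) + k, h⟩ else 0)
  have hL0 : ∀ (a : ℕ) (h : a < n),
      L0 (B ⟨a, h⟩) = if h' : a + k < n then B ⟨a + k, h'⟩ else 0 :=
    fun a h => B.constr_basis _ _ _
  have hL0pow : ∀ (t a : ℕ) (h : a < n),
      (L0 ^ t) (B ⟨a, h⟩) = if h' : a + t * k < n then B ⟨a + t * k, h'⟩ else 0 := by
    intro t
    induction t with
    | zero =>
      intro a h
      simp [h]
    | succ t iht =>
      intro a h
      rw [pow_succ, Module.End.mul_apply, hL0 a h]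
      by_cases h2 : a + k < n
      · rw [dif_pos h2, iht (a + k) h2]
        have he : a + k + t * k = a + (t + 1) * k := by ring
        simp_rw [he]
      · rw [dif_neg h2, map_zero]
        rw [dif_neg ?h3]
        case h3 =>
          intro hc
          apply h2
          have : a + k ≤ a + (t + 1) * k :=
            Nat.add_le_add_left (Nat.le_mul_of_pos_left k (Nat.succ_pos t)) a
          omega
  refine ⟨fun r c => LinearMap.toMatrix' L0 r c, ?_⟩
  have hmat : (Matrix.of (fun r c => LinearMap.toMatrix' L0 r c)).mulVecLin = L0 := by
    have h1 : Matrix.of (fun r c => LinearMap.toMatrix' L0 r c) = LinearMap.toMatrix' L0 := rfl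
    rw [h1, ← Matrix.toLin'_apply', Matrix.toLin'_toMatrix']
  intro j hj
  rw [hmat]
  set m := min (j * k) n with hm
  have hmn : m ≤ n := min_le_right _ _
  have hle : Submodule.span ℝ (Set.range (fun r : Fin m => B (Fin.castLE hmn r)))
      ≤ ⨆ i : Fin j, V.map (L0 ^ (i : ℕ)) := by
    rw [Submodule.span_le]
    rintro x ⟨r, rfl⟩
    have hrk : (r : ℕ) % k < k := Nat.mod_lt _ (by omega)
    have hrj : (r : ℕ) / k < j := by
      have h1 : (r : ℕ) < j * k := lt_of_lt_of_le r.2 (min_le_left _ _)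
      exact Nat.div_lt_of_lt_mul (by rwa [mul_comm] at h1)
    have hsum2 : (r : ℕ) % k + (r : ℕ) / k * k = (r : ℕ) := Nat.mod_add_div' _ _
    have hx : B (Fin.castLE hmn r)
        = (L0 ^ ((r : ℕ) / k)) ((bV ⟨(r : ℕ) % k, hrk⟩ : Fin n → ℝ)) := by
      rw [← hBV ((r : ℕ) % k) hrk]
      rw [hL0pow ((r : ℕ) / k) ((r : ℕ) % k) (lt_of_lt_of_le hrk hkn)]
      rw [dif_pos (by rw [hsum2]; exact lt_of_lt_of_le r.2 hmn)]
      congr 1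
      apply Fin.ext
      simpa using hsum2.symm
    show B (Fin.castLE hmn r) ∈ ⨆ i : Fin j, V.map (L0 ^ (i : ℕ))
    rw [hx]
    refine Submodule.mem_iSup_of_mem ⟨(r : ℕ) / k, hrj⟩ ?_
    exact Submodule.mem_map_of_mem (SetLike.coe_mem _)
  have hfr : Module.finrank ℝ
      (Submodule.span ℝ (Set.range (fun r : Fin m => B (Fin.castLE hmn r)))) = m := by
    have hli : LinearIndependent ℝ (fun r : Fin m => B (Fin.castLE hmn r)) :=
      B.linearIndependent.comp _ (Fin.castLE_injective hmn)
    rw [finrank_span_eq_card hli, Fintype.card_fin]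
  calc m = _ := hfr.symm
    _ ≤ _ := Submodule.finrank_mono hle

lemma upper_bound (n k j : ℕ) (vv : Fin k → Fin n → ℝ) (L : Fin n → Fin n → ℝ) :
    Module.finrank ℝ
        (⨆ i : Fin j, (Submodule.span ℝ (Set.range vv)).map
          ((Matrix.of L).mulVecLin ^ (i : ℕ)) : Submodule ℝ (Fin n → ℝ)) ≤ min (j * k) n := by
  rw [← span_colMat]
  change Module.finrank ℝ (Submodule.span ℝ (Set.range (colMat n k j vv (Matrix.of L)).col)) ≤ _
  rw [← Matrix.rank_eq_finrank_span_cols]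
  refine le_min ?_ ?_
  · have h := (colMat n k j vv (Matrix.of L)).rank_le_card_width
    rwa [Fintype.card_prod, Fintype.card_fin, Fintype.card_fin] at h
  · have h := (colMat n k j vv (Matrix.of L)).rank_le_card_height
    rwa [Fintype.card_fin] at h

end Aux

/-- Matrices are identified with `Fin n → Fin n → ℝ ≅ ℝ^(n²)` carrying
Lebesgue (product) measure. -/
theorem stmt_17 {n k T : ℕ} (hk : 1 ≤ k)
    (V : Submodule ℝ (Fin n → ℝ)) (hV : Module.finrank ℝ V = k) (hT : 1 ≤ T) :
    IsOpen {L : Fin n → Fin n → ℝ |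
        ∀ j, 1 ≤ j → j ≤ T →
          Module.finrank ℝ
              (⨆ i : Fin j, V.map ((Matrix.of L).mulVecLin ^ (i : ℕ)) :
                Submodule ℝ (Fin n → ℝ)) = min (j * k) n} ∧
    Dense {L : Fin n → Fin n → ℝ |
        ∀ j, 1 ≤ j → j ≤ T →
          Module.finrank ℝ
              (⨆ i : Fin j, V.map ((Matrix.of L).mulVecLin ^ (i : ℕ)) :
                Submodule ℝ (Fin n → ℝ)) = min (j * k) n} ∧
    volume {L : Fin n → Fin n → ℝ |
        ¬ ∀ j, 1 ≤ j → j ≤ T →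
          Module.finrank ℝ
              (⨆ i : Fin j, V.map ((Matrix.of L).mulVecLin ^ (i : ℕ)) :
                Submodule ℝ (Fin n → ℝ)) = min (j * k) n} = 0 := by
  classical
  -- basis of V
  let bV : Module.Basis (Fin k) ℝ V := Module.finBasisOfFinrankEq ℝ V hV
  set vv : Fin k → (Fin n → ℝ) := fun a => (bV a : Fin n → ℝ) with hvv
  have hVspan : Submodule.span ℝ (Set.range vv) = V := by
    have h1 : Set.range vv = V.subtype '' (Set.range bV) := by
      rw [← Set.range_comp]; rfl
    rw [h1, ← Submodule.map_span, bV.span_eq, Submodule.map_top, Submodule.range_subtype]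
  set σm : (Fin n → Fin n → ℝ) → (Fin n × Fin n → ℝ) := fun L rc => L rc.1 rc.2 with hσm
  have hcond : ∀ (j : ℕ) (L : Fin n → Fin n → ℝ),
      (Module.finrank ℝ
        (⨆ i : Fin j, V.map ((Matrix.of L).mulVecLin ^ (i : ℕ)) :
          Submodule ℝ (Fin n → ℝ)) = min (j * k) n)
        ↔ MvPolynomial.eval (σm L) (pjPoly n k j vv) ≠ 0 := by
    intro j L
    rw [← hVspan]
    exact cond_iff_eval n k j vv L
  obtain ⟨L0, hL0⟩ := witness n k hk V hV
  have hpj : ∀ j : ℕ, 1 ≤ j → pjPoly n k j vv ≠ 0 := by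
    intro j hj h
    have heq : Module.finrank ℝ
        (⨆ i : Fin j, V.map ((Matrix.of L0).mulVecLin ^ (i : ℕ)) :
          Submodule ℝ (Fin n → ℝ)) = min (j * k) n := by
      refine le_antisymm ?_ (hL0 j hj)
      rw [← hVspan]
      exact upper_bound n k j vv L0
    exact ((hcond j L0).mp heq) (by rw [h, map_zero])
  set S := {L : Fin n → Fin n → ℝ |
        ∀ j, 1 ≤ j → j ≤ T →
          Module.finrank ℝ
              (⨆ i : Fin j, V.map ((Matrix.of L).mulVecLin ^ (i : ℕ)) :
                Submodule ℝ (Fin n → ℝ)) = min (j * k) n} with hS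
  have hSeq : S = ⋂ j ∈ Finset.Icc 1 T,
      {L : Fin n → Fin n → ℝ | MvPolynomial.eval (σm L) (pjPoly n k j vv) ≠ 0} := by
    ext L
    simp only [hS, Set.mem_setOf_eq, Set.mem_iInter, Finset.mem_Icc]
    constructor
    · rintro h j ⟨h1, h2⟩
      exact (hcond j L).mp (h j h1 h2)
    · intro h j h1 h2
      exact (hcond j L).mpr (h j ⟨h1, h2⟩)
  have hσc : Continuous σm :=
    continuous_pi fun rc => (continuous_apply rc.2).comp (continuous_apply rc.1)
  have hopen : IsOpen S := by
    rw [hSeq]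
    refine isOpen_biInter_finset fun j _ => ?_
    have hcont : Continuous fun L => MvPolynomial.eval (σm L) (pjPoly n k j vv) :=
      (MvPolynomial.continuous_eval (p := pjPoly n k j vv)).comp hσc
    exact IsOpen.preimage hcont isOpen_compl_singleton
  have hnull : volume Sᶜ = 0 := by
    rw [hSeq, Set.compl_iInter₂]
    refine measure_biUnion_null_iff (Finset.Icc 1 T).countable_toSet |>.mpr ?_
    intro j hj
    have hj1 : 1 ≤ j := (Finset.mem_Icc.mp hj).1
    have hcompl : {L : Fin n → Fin n → ℝ |
        MvPolynomial.eval (σm L) (pjPoly n k j vv) ≠ 0}ᶜ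
        = σm ⁻¹' {x : Fin n × Fin n → ℝ | MvPolynomial.eval x (pjPoly n k j vv) = 0} := by
      ext L
      simp [Set.mem_compl_iff, Set.mem_setOf_eq]
    rw [hcompl]
    have hms : MeasurableSet {x : Fin n × Fin n → ℝ |
        MvPolynomial.eval x (pjPoly n k j vv) = 0} :=
      (MvPolynomial.continuous_eval (p := pjPoly n k j vv)).measurable
        (measurableSet_singleton 0)
    rw [(mp_curry n).measure_preimage hms.nullMeasurableSet]
    exact mv_null _ (hpj j hj1)
  have hdense : Dense S := by
    rw [dense_iff_inter_open]
    intro U hU hUne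
    by_contra hno
    rw [Set.not_nonempty_iff_eq_empty] at hno
    have hsub : U ⊆ Sᶜ := fun x hx => fun hxS =>
      (Set.eq_empty_iff_forall_notMem.mp hno x) ⟨hx, hxS⟩
    exact hU.measure_ne_zero volume hUne (measure_mono_null hsub hnull)
  exact ⟨hopen, hdense, by
    have : {L : Fin n → Fin n → ℝ |
        ¬ ∀ j, 1 ≤ j → j ≤ T →
          Module.finrank ℝ
              (⨆ i : Fin j, V.map ((Matrix.of L).mulVecLin ^ (i : ℕ)) :
                Submodule ℝ (Fin n → ℝ)) = min (j * k) n} = Sᶜ := rfl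
    rw [this]
    exact hnull⟩
end
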